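/- With notation as in the gluing construction, the elements k_1·x + k_2·(F_B + i), for x an element of ⟨A⟩ with x < F_A (or x = 0, i.e., x in the set of elements of ⟨A⟩ less than F_A) and 1 ≤ i ≤ k_1, are pairwise distinct elements of ⟨C⟩ that are strictly less than F_C = k_1F_A + k_2F_B + k_1k_2. Consequently n_C ≥ k_1·n_A, where n_S denotes the number of elements of a numerical semigroup S less than its Frobenius number. -/

import Mathlib

/-- The numerical semigroup (additive submonoid of ℕ) generated by a set `A`. -/
def NS (A : Set ℕ) : AddSubmonoid ℕ := AddSubmonoid.closure A

/-- `F` is the Frobenius number of `S`: `F ∉ S` and every larger integer lies in `S`. -/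
def IsFrobenius (S : AddSubmonoid ℕ) (F : ℕ) : Prop :=
  F ∉ S ∧ ∀ m : ℕ, F < m → m ∈ S

/-- The generating set `k₁A ∪ k₂B` of the gluing. -/
def glueGens (A B : Set ℕ) (k1 k2 : ℕ) : Set ℕ :=
  (fun a => k1 * a) '' A ∪ (fun b => k2 * b) '' B

/-- `n_S` : the number of elements of `S` less than the Frobenius number `F`. -/
noncomputable def nElt (S : AddSubmonoid ℕ) (F : ℕ) : ℕ := {s : ℕ | s ∈ S ∧ s < F}.ncard

lemma mul_mem_closure_image (A : Set ℕ) (k : ℕ) {x : ℕ} (hx : x ∈ AddSubmonoid.closure A) :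
    k * x ∈ AddSubmonoid.closure ((fun a => k * a) '' A) := by
  induction hx using AddSubmonoid.closure_induction with
  | mem a ha => exact AddSubmonoid.subset_closure ⟨a, ha, rfl⟩
  | zero => simpa using (AddSubmonoid.closure ((fun a => k * a) '' A)).zero_mem
  | add a b _ _ ha hb => rw [mul_add]; exact add_mem ha hb

lemma ncard_prod' {α β : Type*} (s : Set α) (t : Set β) :
    (s ×ˢ t).ncard = s.ncard * t.ncard := by
  rw [← Nat.card_coe_set_eq, ← Nat.card_coe_set_eq, ← Nat.card_coe_set_eq,
    Nat.card_congr (Equiv.Set.prod s t), Nat.card_prod]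

/-- The elements `k₁x + k₂(F_B + i)`, for `x ∈ ⟨A⟩` with `x < F_A` and `1 ≤ i ≤ k₁`, are
pairwise distinct elements of `⟨C⟩` strictly less than `F_C`; hence `n_C ≥ k₁ n_A`. -/
theorem glue_count_A (A B : Set ℕ) (FA FB k1 k2 : ℕ)
    (hFA : IsFrobenius (NS A) FA) (hFB : IsFrobenius (NS B) FB)
    (hk1B : k1 ∈ NS B) (hk2A : k2 ∈ NS A)
    (hcop : Nat.Coprime k1 k2) :
    (∀ x ∈ NS A, x < FA → ∀ i : ℕ, 1 ≤ i → i ≤ k1 →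
        k1 * x + k2 * (FB + i) ∈ NS (glueGens A B k1 k2) ∧
        k1 * x + k2 * (FB + i) < k1 * FA + k2 * FB + k1 * k2) ∧
    (∀ x ∈ NS A, x < FA → ∀ x' ∈ NS A, x' < FA →
      ∀ i i' : ℕ, 1 ≤ i → i ≤ k1 → 1 ≤ i' → i' ≤ k1 →
        k1 * x + k2 * (FB + i) = k1 * x' + k2 * (FB + i') → x = x' ∧ i = i') ∧
    nElt (NS (glueGens A B k1 k2)) (k1 * FA + k2 * FB + k1 * k2) ≥ k1 * nElt (NS A) FA := by
  have part1 : ∀ x ∈ NS A, x < FA → ∀ i : ℕ, 1 ≤ i → i ≤ k1 →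
      k1 * x + k2 * (FB + i) ∈ NS (glueGens A B k1 k2) ∧
      k1 * x + k2 * (FB + i) < k1 * FA + k2 * FB + k1 * k2 := by
    intro x hx hxFA i hi1 hik
    constructor
    · apply add_mem
      · exact AddSubmonoid.closure_mono Set.subset_union_left (mul_mem_closure_image A k1 hx)
      · have hmem : FB + i ∈ NS B := hFB.2 _ (by omega)
        exact AddSubmonoid.closure_mono Set.subset_union_right (mul_mem_closure_image B k2 hmem)
    · have h1 : k1 * (x + 1) ≤ k1 * FA := Nat.mul_le_mul_left k1 hxFA
      have h2 : k2 * i ≤ k2 * k1 := Nat.mul_le_mul_left k2 hik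
      nlinarith
  have part2 : ∀ x ∈ NS A, x < FA → ∀ x' ∈ NS A, x' < FA →
      ∀ i i' : ℕ, 1 ≤ i → i ≤ k1 → 1 ≤ i' → i' ≤ k1 →
        k1 * x + k2 * (FB + i) = k1 * x' + k2 * (FB + i') → x = x' ∧ i = i' := by
    intro x _ _ x' _ _ i i' hi1 hik hi'1 hi'k heq
    have heq' : k1 * x + k2 * FB + k2 * i = k1 * x' + k2 * FB + k2 * i' := by
      rw [Nat.mul_add k2, Nat.mul_add k2] at heq
      omega
    have hz : (k1:ℤ) * x + k2 * FB + k2 * i = k1 * x' + k2 * FB + k2 * i' := by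
      exact_mod_cast heq'
    have hmod : k2 * i ≡ k2 * i' [MOD k1] := by
      rw [Nat.modEq_iff_dvd]
      exact ⟨(x:ℤ) - x', by push_cast; linear_combination -hz⟩
    have hmod2 : i ≡ i' [MOD k1] :=
      (Nat.ModEq.cancel_left_of_coprime (by simpa [Nat.Coprime] using hcop)) hmod
    have hdvd : (k1 : ℤ) ∣ (i' : ℤ) - i := hmod2.dvd
    obtain ⟨c, hc⟩ := hdvd
    have hc0 : c = 0 := by
      rcases lt_trichotomy c 0 with h | h | h
      · nlinarith [hc, (by exact_mod_cast hi'1 : (1:ℤ) ≤ i'), (by exact_mod_cast hik : (i:ℤ) ≤ k1)]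
      · exact h
      · nlinarith [hc, (by exact_mod_cast hi1 : (1:ℤ) ≤ i), (by exact_mod_cast hi'k : (i':ℤ) ≤ k1)]
    have hii' : i = i' := by
      have : (i' : ℤ) - i = 0 := by rw [hc, hc0, mul_zero]
      omega
    subst hii'
    refine ⟨?_, rfl⟩
    have : k1 * x = k1 * x' := by omega
    have hk1pos : 0 < k1 := by omega
    exact Nat.eq_of_mul_eq_mul_left hk1pos this
  refine ⟨part1, part2, ?_⟩
  rcases Nat.eq_zero_or_pos k1 with hk0 | hk1pos
  · simp [hk0]
  set T : Set ℕ := {s : ℕ | s ∈ NS A ∧ s < FA} with hT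
  set U : Set ℕ := {s : ℕ | s ∈ NS (glueGens A B k1 k2) ∧ s < k1 * FA + k2 * FB + k1 * k2}
    with hU
  have hTfin : T.Finite := (Set.finite_Iio FA).subset (fun s hs => hs.2)
  have hUfin : U.Finite :=
    (Set.finite_Iio (k1 * FA + k2 * FB + k1 * k2)).subset (fun s hs => hs.2)
  set f : ℕ × ℕ → ℕ := fun p => k1 * p.1 + k2 * (FB + p.2) with hf
  have hsub : f '' (T ×ˢ Set.Icc 1 k1) ⊆ U := by
    rintro _ ⟨⟨x, i⟩, ⟨⟨hx, hxFA⟩, hi1, hik⟩, rfl⟩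
    exact (part1 x hx hxFA i hi1 hik)
  have hinj : Set.InjOn f (T ×ˢ Set.Icc 1 k1) := by
    rintro ⟨x, i⟩ ⟨⟨hx, hxFA⟩, hi1, hik⟩ ⟨x', i'⟩ ⟨⟨hx', hx'FA⟩, hi'1, hi'k⟩ heq
    obtain ⟨h1, h2⟩ := part2 x hx hxFA x' hx' hx'FA i i' hi1 hik hi'1 hi'k heq
    simp [h1, h2]
  have hcard : (f '' (T ×ˢ Set.Icc 1 k1)).ncard = T.ncard * k1 := by
    rw [Set.ncard_image_of_injOn hinj, ncard_prod']
    congr 1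
    rw [show Set.Icc 1 k1 = (Finset.Icc 1 k1 : Finset ℕ) by simp,
      Set.ncard_coe_finset, Nat.card_Icc]
    omega
  have hle : (f '' (T ×ˢ Set.Icc 1 k1)).ncard ≤ U.ncard :=
    Set.ncard_le_ncard hsub hUfin
  calc k1 * nElt (NS A) FA = T.ncard * k1 := by rw [Nat.mul_comm]; rfl
    _ ≤ nElt (NS (glueGens A B k1 k2)) (k1 * FA + k2 * FB + k1 * k2) := by
        rw [← hcard]; exact hle
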